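/- In the electricity pool model (P2), the lower bound of MCI, LBMCI(E) = a·min_{1 ≤ t ≤ T} g*_t(E) + b, is monotonically non-decreasing in E on [0, ∞); equivalently, the map E ↦ min_t g*_t(E) is non-decreasing. -/

import Mathlib

open Finset Filter

/-- Feasibility for the electricity pool model (P2) at storage capacity `E`:
the states of charge `x_k = E/2 + ∑_{t ≤ k} u t` (with `x_0 = E/2`) satisfy
`0 ≤ x_k ≤ E` for all `k`, and the terminal condition `x_T = E/2` holds. -/
def poolFeasible (T : ℕ) (E : ℝ) (u : Fin T → ℝ) : Prop :=
  (∀ k : Fin T, 0 ≤ E / 2 + ∑ t ∈ Finset.Iic k, u t) ∧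
  (∀ k : Fin T, E / 2 + ∑ t ∈ Finset.Iic k, u t ≤ E) ∧
  E / 2 + ∑ t, u t = E / 2

/-- Total generation cost `∑ t C (d t + u t)` with `C g = (1/2)·a·g² + b·g + c`. -/
noncomputable def poolCost (T : ℕ) (a b c : ℝ) (d u : Fin T → ℝ) : ℝ :=
  ∑ t, ((1 / 2) * a * (d t + u t) ^ 2 + b * (d t + u t) + c)

/-- Optimal cost `C*(E)` of the pool model (P2). -/
noncomputable def poolCstar (T : ℕ) (a b c : ℝ) (d : Fin T → ℝ) (E : ℝ) : ℝ :=
  sInf {y : ℝ | ∃ u : Fin T → ℝ, poolFeasible T E u ∧ y = poolCost T a b c d u}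

noncomputable def ext0 {T : ℕ} (f : Fin T → ℝ) : ℕ → ℝ := fun n => if h : n < T then f ⟨n, h⟩ else 0

lemma ext0_lt {T : ℕ} (f : Fin T → ℝ) {n : ℕ} (h : n < T) : ext0 f n = f ⟨n, h⟩ := dif_pos h

lemma ext0_ge {T : ℕ} (f : Fin T → ℝ) {n : ℕ} (h : ¬ n < T) : ext0 f n = 0 := dif_neg h

noncomputable def Ssum {T : ℕ} (u : Fin T → ℝ) : ℕ → ℝ := fun n => ∑ i ∈ Finset.range n, ext0 u i

lemma sum_Iic_ext0 {T : ℕ} (f : Fin T → ℝ) (k : Fin T) :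
    ∑ t ∈ Finset.Iic k, f t = ∑ i ∈ Finset.range (k.1 + 1), ext0 f i := by
  refine Finset.sum_bij' (fun (t : Fin T) (_ : t ∈ Finset.Iic k) => (t : ℕ))
    (fun (i : ℕ) (hi : i ∈ Finset.range (k.1+1)) =>
      (⟨i, lt_of_le_of_lt (Nat.lt_succ_iff.mp (Finset.mem_range.mp hi)) k.2⟩ : Fin T))
    ?_ ?_ ?_ ?_ ?_
  · intro t ht
    have h1 : (t : ℕ) ≤ (k : ℕ) := Fin.le_def.mp (Finset.mem_Iic.mp ht)
    exact Finset.mem_range.mpr (Nat.lt_succ_of_le h1)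
  · intro i hi
    exact Finset.mem_Iic.mpr (Fin.mk_le_mk.mpr (Nat.lt_succ_iff.mp (Finset.mem_range.mp hi)))
  · intro t ht; rfl
  · intro i hi; rfl
  · intro t ht; exact (ext0_lt f t.2).symm

lemma sum_univ_ext0 {T : ℕ} (f : Fin T → ℝ) :
    ∑ t, f t = ∑ i ∈ Finset.range T, ext0 f i := by
  rw [← Fin.sum_univ_eq_sum_range (fun i => ext0 f i) T]
  exact Finset.sum_congr rfl (fun t _ => (ext0_lt f t.2).symm)

lemma feas_iff {T : ℕ} {E : ℝ} {u : Fin T → ℝ} :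
    poolFeasible T E u ↔
      ((∀ k, k < T → 0 ≤ E / 2 + Ssum u (k + 1) ∧ E / 2 + Ssum u (k + 1) ≤ E) ∧
        Ssum u T = 0) := by
  constructor
  · rintro ⟨h1, h2, h3⟩
    refine ⟨fun k hk => ?_, ?_⟩
    · have e := sum_Iic_ext0 u ⟨k, hk⟩
      exact ⟨by rw [Ssum]; rw [← e]; exact h1 ⟨k, hk⟩, by rw [Ssum, ← e]; exact h2 ⟨k, hk⟩⟩
    · have e := sum_univ_ext0 u
      have : ∑ t, u t = 0 := by linarith
      rw [Ssum, ← e]; exact this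
  · rintro ⟨h1, h2⟩
    refine ⟨fun k => ?_, fun k => ?_, ?_⟩
    · rw [sum_Iic_ext0 u k]; exact (h1 k.1 k.2).1
    · rw [sum_Iic_ext0 u k]; exact (h1 k.1 k.2).2
    · rw [sum_univ_ext0 u]; rw [Ssum] at h2; rw [h2]; ring

lemma cost_eq {T : ℕ} (a b c : ℝ) (d u : Fin T → ℝ) :
    poolCost T a b c d u =
      ∑ i ∈ Finset.range T,
        ((1 / 2) * a * (ext0 d i + ext0 u i) ^ 2 + b * (ext0 d i + ext0 u i) + c) := by
  rw [poolCost, sum_univ_ext0]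
  refine Finset.sum_congr rfl (fun i hi => ?_)
  have h : i < T := Finset.mem_range.mp hi
  rw [ext0_lt _ h, ext0_lt d h, ext0_lt u h]

lemma pool_bdd {T : ℕ} {a : ℝ} (b c : ℝ) {E : ℝ} (ha : 0 < a) (d : Fin T → ℝ) :
    ∀ y ∈ {y : ℝ | ∃ u : Fin T → ℝ, poolFeasible T E u ∧ y = poolCost T a b c d u},
      b * (∑ t, d t) + T * c ≤ y := by
  rintro y ⟨u, hu, rfl⟩
  have hsum : ∑ t, u t = 0 := by have := hu.2.2; linarith
  have h1 : poolCost T a b c d u ≥ ∑ t, (b * (d t + u t) + c) := by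
    rw [poolCost]
    refine Finset.sum_le_sum (fun t _ => ?_)
    nlinarith [sq_nonneg (d t + u t)]
  have h2 : ∑ t, (b * (d t + u t) + c) = b * (∑ t, d t) + T * c := by
    rw [Finset.sum_add_distrib, ← Finset.mul_sum, Finset.sum_add_distrib, hsum]
    simp [mul_comm]
  linarith

lemma opt_diff {T : ℕ} {a : ℝ} {b c E : ℝ} {d u : Fin T → ℝ}
    (hfe : poolFeasible T E u) (hopt : poolCost T a b c d u = poolCstar T a b c d E)
    (ha : 0 < a)
    (k : ℕ) (hk : k + 1 < T) (ε : ℝ)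
    (h0 : 0 ≤ E / 2 + Ssum u (k + 1) + ε) (hXE : E / 2 + Ssum u (k + 1) + ε ≤ E) :
    0 ≤ ε * a * ((ext0 d k + ext0 u k) - (ext0 d (k + 1) + ext0 u (k + 1))) + a * ε ^ 2 := by
  classical
  have hkT : k < T := by omega
  set u' : Fin T → ℝ :=
    fun t => u t + (if (t : ℕ) = k then ε else 0) + (if (t : ℕ) = k + 1 then -ε else 0) with hu'
  -- pointwise ext0 identity
  have hext : ∀ i : ℕ, ext0 u' i =
      ext0 u i + (if i = k then ε else 0) + (if i = k + 1 then -ε else 0) := by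
    intro i
    by_cases h : i < T
    · rw [ext0_lt _ h, ext0_lt u h]
    · rw [ext0_ge _ h, ext0_ge u h]
      have h1 : ¬ i = k := by omega
      have h2 : ¬ i = k + 1 := by omega
      simp [h1, h2]
  have hSsum : ∀ n : ℕ, Ssum u' n =
      Ssum u n + (if k < n then ε else 0) + (if k + 1 < n then -ε else 0) := by
    intro n
    rw [Ssum, Ssum]
    calc ∑ i ∈ Finset.range n, ext0 u' i
        = ∑ i ∈ Finset.range n, (ext0 u i + (if i = k then ε else 0)
            + (if i = k + 1 then -ε else 0)) := Finset.sum_congr rfl (fun i _ => hext i)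
      _ = (∑ i ∈ Finset.range n, ext0 u i) + (∑ i ∈ Finset.range n, if i = k then ε else 0)
            + (∑ i ∈ Finset.range n, if i = k + 1 then -ε else 0) := by
          rw [Finset.sum_add_distrib, Finset.sum_add_distrib]
      _ = _ := by
          rw [Finset.sum_ite_eq' (Finset.range n) k (fun _ => ε),
            Finset.sum_ite_eq' (Finset.range n) (k+1) (fun _ => -ε)]
          simp [Finset.mem_range]
  -- feasibility of u'
  have hfeN := feas_iff.mp hfe
  have hfe' : poolFeasible T E u' := by
    refine feas_iff.mpr ⟨fun j hj => ?_, ?_⟩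
    · rw [hSsum (j+1)]
      rcases lt_trichotomy j k with h | h | h
      · have h1 : ¬ k < j + 1 := by omega
        have h2 : ¬ k + 1 < j + 1 := by omega
        simp only [h1, h2, if_false]
        have := hfeN.1 j hj
        constructor <;> linarith [this.1, this.2]
      · subst h
        have h1 : j < j + 1 := by omega
        have h2 : ¬ j + 1 < j + 1 := by omega
        simp only [h1, h2, if_true, if_false]
        constructor <;> linarith
      · have h1 : k < j + 1 := by omega
        have h2 : k + 1 < j + 1 := by omega
        simp only [h1, h2, if_true]
        have := hfeN.1 j hj
        constructor <;> linarith [this.1, this.2]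
    · rw [hSsum T]
      have h1 : k < T := hkT
      have h2 : k + 1 < T := hk
      simp only [h1, h2, if_true]
      linarith [hfeN.2]
  -- cost identity
  set gk : ℝ := ext0 d k + ext0 u k with hgk
  set gk1 : ℝ := ext0 d (k+1) + ext0 u (k+1) with hgk1
  have hcost : poolCost T a b c d u' =
      poolCost T a b c d u + (ε * a * (gk - gk1) + a * ε ^ 2) := by
    rw [cost_eq a b c d u', cost_eq a b c d u]
    have key : ∀ i ∈ Finset.range T,
        ((1 / 2) * a * (ext0 d i + ext0 u' i) ^ 2 + b * (ext0 d i + ext0 u' i) + c) =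
        ((1 / 2) * a * (ext0 d i + ext0 u i) ^ 2 + b * (ext0 d i + ext0 u i) + c)
          + (if i = k then ((1/2)*a*(gk+ε)^2 + b*(gk+ε)) - ((1/2)*a*gk^2 + b*gk) else 0)
          + (if i = k + 1 then ((1/2)*a*(gk1-ε)^2 + b*(gk1-ε)) - ((1/2)*a*gk1^2 + b*gk1) else 0) := by
      intro i _
      by_cases h1 : i = k
      · subst h1
        have h2 : ¬ i = i + 1 := by omega
        rw [hext i]
        simp only [if_neg h2, eq_self_iff_true, if_true]
        rw [hgk]
        ring
      · by_cases h2 : i = k + 1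
        · subst h2
          rw [hext (k+1)]
          simp only [if_neg h1, eq_self_iff_true, if_true]
          rw [hgk1]
          ring
        · rw [hext i]
          simp only [if_neg h1, if_neg h2, add_zero]
    rw [Finset.sum_congr rfl key, Finset.sum_add_distrib, Finset.sum_add_distrib,
      Finset.sum_ite_eq' (Finset.range T) k, Finset.sum_ite_eq' (Finset.range T) (k+1)]
    simp only [Finset.mem_range, hkT, hk, if_true]
    ring
  -- optimality
  have hmem : poolCost T a b c d u' ∈
      {y : ℝ | ∃ v : Fin T → ℝ, poolFeasible T E v ∧ y = poolCost T a b c d v} :=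
    ⟨u', hfe', rfl⟩
  have hbdd : BddBelow {y : ℝ | ∃ v : Fin T → ℝ, poolFeasible T E v ∧ y = poolCost T a b c d v} :=
    ⟨b * (∑ t, d t) + T * c, fun y hy => pool_bdd b c ha d y hy⟩
  have hle : poolCost T a b c d u ≤ poolCost T a b c d u' := by
    rw [hopt, poolCstar]
    exact csInf_le hbdd hmem
  linarith [hle, hcost.ge, hcost.le]

/-- If the state of charge after step `k` is strictly below `E`, the optimal
generation cannot strictly increase from step `k` to `k+1`. -/
lemma opt_up {T : ℕ} {a b c E : ℝ} {d u : Fin T → ℝ}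
    (hfe : poolFeasible T E u) (hopt : poolCost T a b c d u = poolCstar T a b c d E)
    (ha : 0 < a) (k : ℕ) (hk : k + 1 < T)
    (hlt : E / 2 + Ssum u (k + 1) < E) :
    ext0 d (k + 1) + ext0 u (k + 1) ≤ ext0 d k + ext0 u k := by
  by_contra hcon
  push_neg at hcon
  set x : ℝ := E / 2 + Ssum u (k + 1) with hx
  set δ : ℝ := (ext0 d k + ext0 u k) - (ext0 d (k + 1) + ext0 u (k + 1)) with hδ
  have hδneg : δ < 0 := by rw [hδ]; linarith
  have hx0 : 0 ≤ x := ((feas_iff.mp hfe).1 k (by omega)).1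
  set ε : ℝ := min (-δ / 2) (E - x) with hε
  have hε0 : 0 < ε := lt_min (by linarith) (by linarith)
  have h0 : 0 ≤ E / 2 + Ssum u (k + 1) + ε := by rw [← hx]; linarith
  have hXE : E / 2 + Ssum u (k + 1) + ε ≤ E := by
    rw [← hx]
    have : ε ≤ E - x := min_le_right _ _
    linarith
  have h5 := opt_diff hfe hopt ha k hk ε h0 hXE
  rw [← hδ] at h5
  have hεδ : ε ≤ -δ / 2 := min_le_left _ _
  nlinarith [h5, hε0, hεδ, hδneg, ha, mul_pos ha hε0, mul_pos (mul_pos ha hε0) hε0]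

/-- If the state of charge after step `k` is strictly above `0`, the optimal
generation cannot strictly decrease from step `k` to `k+1`. -/
lemma opt_down {T : ℕ} {a b c E : ℝ} {d u : Fin T → ℝ}
    (hfe : poolFeasible T E u) (hopt : poolCost T a b c d u = poolCstar T a b c d E)
    (ha : 0 < a) (k : ℕ) (hk : k + 1 < T)
    (hgt : 0 < E / 2 + Ssum u (k + 1)) :
    ext0 d k + ext0 u k ≤ ext0 d (k + 1) + ext0 u (k + 1) := by
  by_contra hcon
  push_neg at hcon
  set x : ℝ := E / 2 + Ssum u (k + 1) with hx
  set δ : ℝ := (ext0 d k + ext0 u k) - (ext0 d (k + 1) + ext0 u (k + 1)) with hδ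
  have hδpos : 0 < δ := by rw [hδ]; linarith
  have hxE : x ≤ E := ((feas_iff.mp hfe).1 k (by omega)).2
  set r : ℝ := min (δ / 2) x with hr
  have hr0 : 0 < r := lt_min (by linarith) (by linarith)
  have h0 : 0 ≤ E / 2 + Ssum u (k + 1) + (-r) := by
    rw [← hx]
    have : r ≤ x := min_le_right _ _
    linarith
  have hXE : E / 2 + Ssum u (k + 1) + (-r) ≤ E := by rw [← hx]; linarith
  have h5 := opt_diff hfe hopt ha k hk (-r) h0 hXE
  rw [← hδ] at h5
  have hrδ : r ≤ δ / 2 := min_le_left _ _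
  nlinarith [h5, hr0, hrδ, hδpos, ha, mul_pos ha hr0, mul_pos (mul_pos ha hr0) hr0]


/-- In the pool model (P2),
`LBMCI(E) = a·min_t g*_t(E) + b` is monotonically non-decreasing in `E` on
`[0, ∞)`; equivalently `E ↦ min_t g*_t(E)` is non-decreasing. Here `gstar`
is any selection of optimal generation profiles. -/
theorem pool_lbmci_monotone
    (T : ℕ) (hT : 1 ≤ T) (a b c : ℝ) (ha : 0 < a) (d : Fin T → ℝ)
    (gstar : ℝ → Fin T → ℝ)
    (hgstar : ∀ E : ℝ, 0 ≤ E → ∃ u : Fin T → ℝ, poolFeasible T E u ∧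
      (∀ t, gstar E t = d t + u t) ∧
      poolCost T a b c d u = poolCstar T a b c d E) :
    ∀ E₁ E₂ : ℝ, 0 ≤ E₁ → E₁ ≤ E₂ →
      a * Finset.univ.inf' ⟨⟨0, hT⟩, Finset.mem_univ _⟩ (gstar E₁) + b ≤
        a * Finset.univ.inf' ⟨⟨0, hT⟩, Finset.mem_univ _⟩ (gstar E₂) + b ∧
      Finset.univ.inf' ⟨⟨0, hT⟩, Finset.mem_univ _⟩ (gstar E₁) ≤
        Finset.univ.inf' ⟨⟨0, hT⟩, Finset.mem_univ _⟩ (gstar E₂) := by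
  classical
  intro E₁ E₂ hE₁ hE₁₂
  have hE₂ : 0 ≤ E₂ := le_trans hE₁ hE₁₂
  obtain ⟨u₁, hfe₁, hgv₁, hopt₁⟩ := hgstar E₁ hE₁
  obtain ⟨u₂, hfe₂, hgv₂, hopt₂⟩ := hgstar E₂ hE₂
  set m₁ := Finset.univ.inf' ⟨⟨0, hT⟩, Finset.mem_univ _⟩ (gstar E₁) with hm₁def
  set m₂ := Finset.univ.inf' ⟨⟨0, hT⟩, Finset.mem_univ _⟩ (gstar E₂) with hm₂def
  suffices h : m₁ ≤ m₂ by
    exact ⟨add_le_add_left (mul_le_mul_of_nonneg_left h ha.le) b, h⟩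
  set g1 : ℕ → ℝ := fun i => ext0 d i + ext0 u₁ i with hg1
  set g2 : ℕ → ℝ := fun i => ext0 d i + ext0 u₂ i with hg2
  have hg1app : ∀ j, g1 j = ext0 d j + ext0 u₁ j := fun j => rfl
  have hg2app : ∀ j, g2 j = ext0 d j + ext0 u₂ j := fun j => rfl
  have hg1v : ∀ (i : ℕ) (h : i < T), g1 i = gstar E₁ ⟨i, h⟩ := by
    intro i h
    rw [hg1app i, ext0_lt d h, ext0_lt u₁ h, ← hgv₁]
  have hg2v : ∀ (i : ℕ) (h : i < T), g2 i = gstar E₂ ⟨i, h⟩ := by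
    intro i h
    rw [hg2app i, ext0_lt d h, ext0_lt u₂ h, ← hgv₂]
  have hmin1 : ∀ (i : ℕ), i < T → m₁ ≤ g1 i := by
    intro i h
    rw [hg1v i h, hm₁def]
    exact Finset.inf'_le _ (Finset.mem_univ _)
  have hmin2 : ∀ (i : ℕ), i < T → m₂ ≤ g2 i := by
    intro i h
    rw [hg2v i h, hm₂def]
    exact Finset.inf'_le _ (Finset.mem_univ _)
  obtain ⟨t0, -, hmt⟩ := Finset.exists_mem_eq_inf'
    (⟨⟨0, hT⟩, Finset.mem_univ _⟩ : (Finset.univ : Finset (Fin T)).Nonempty) (gstar E₂)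
  have ht' : (t0 : ℕ) < T := t0.2
  have hgt' : g2 t0 = m₂ := by
    rw [hg2v t0 ht', hm₂def, hmt]
  -- the right end of the flat window
  have hqex : ∃ j, (t0 : ℕ) ≤ j ∧ (j + 1 = T ∨ g2 (j + 1) ≠ m₂) :=
    ⟨T - 1, by omega, Or.inl (by omega)⟩
  set q := Nat.find hqex with hqdef
  have hqspec := Nat.find_spec hqex
  have hqt : (t0 : ℕ) ≤ q := hqspec.1
  have hqT : q < T := by
    have : q ≤ T - 1 := Nat.find_le ⟨by omega, Or.inl (by omega)⟩
    omega
  have hqconst : ∀ j, (t0 : ℕ) ≤ j → j ≤ q → g2 j = m₂ := by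
    intro j hj
    induction j, hj using Nat.le_induction with
    | base => intro _; exact hgt'
    | succ n hn ih =>
      intro hnq
      have hlt : n < q := by omega
      have hmin := Nat.find_min hqex hlt
      push_neg at hmin
      exact (hmin (by omega)).2
  -- the left end of the flat window
  have hsex : ∃ s, (t0 : ℕ) ≤ s ∨ g2 ((t0 : ℕ) - s - 1) ≠ m₂ := ⟨(t0 : ℕ), Or.inl le_rfl⟩
  set s := Nat.find hsex with hsdef
  set p := (t0 : ℕ) - s with hpdef
  have hpt : p ≤ (t0 : ℕ) := by omega
  have hpconst : ∀ j, p ≤ j → j ≤ (t0 : ℕ) → g2 j = m₂ := by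
    intro j hpj hjt
    rcases eq_or_lt_of_le hjt with rfl | hjt'
    · exact hgt'
    · have hs' : (t0 : ℕ) - j - 1 < s := by omega
      have hmin := Nat.find_min hsex hs'
      push_neg at hmin
      have h2 := hmin.2
      have heq : (t0 : ℕ) - ((t0 : ℕ) - j - 1) - 1 = j := by omega
      rwa [heq] at h2
  have hp2 : p = 0 ∨ (1 ≤ p ∧ g2 (p - 1) ≠ m₂) := by
    rcases Nat.find_spec hsex with h | h
    · left; omega
    · by_cases hts : (t0 : ℕ) ≤ s
      · left; omega
      · right
        refine ⟨by omega, ?_⟩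
        have heq : p - 1 = (t0 : ℕ) - s - 1 := by omega
        rwa [heq]
  -- the window
  set W := Finset.Ico p (q + 1) with hWdef
  have hpq : p ≤ q := le_trans hpt hqt
  have hnW : W.card = q + 1 - p := Nat.card_Ico p (q + 1)
  have hWsub : ∀ j ∈ W, j < T := by
    intro j hj
    have := Finset.mem_Ico.mp hj
    omega
  have hsum2 : ∑ j ∈ W, g2 j = (W.card : ℝ) * m₂ := by
    have hc : ∀ j ∈ W, g2 j = m₂ := by
      intro j hj
      obtain ⟨h1, h2⟩ := Finset.mem_Ico.mp hj
      rcases le_or_gt j (t0 : ℕ) with h | h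
      · exact hpconst j h1 h
      · exact hqconst j (le_of_lt h) (by omega)
    rw [Finset.sum_congr rfl hc, Finset.sum_const, nsmul_eq_mul]
  have hdecomp : ∀ v : Fin T → ℝ, ∑ j ∈ W, (ext0 d j + ext0 v j)
      = (∑ j ∈ W, ext0 d j) + (Ssum v (q + 1) - Ssum v p) := by
    intro v
    rw [Finset.sum_add_distrib]
    congr 1
    rw [Ssum]
    exact Finset.sum_Ico_eq_sub _ (by omega : p ≤ q + 1)
  have hfeN1 := feas_iff.mp hfe₁
  have hfeN2 := feas_iff.mp hfe₂
  -- value of Ssum u₂ at the right end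
  have hA2 : Ssum u₂ (q + 1) = (if q + 1 = T then 0 else E₂ / 2) := by
    by_cases hqT' : q + 1 = T
    · rw [if_pos hqT', hqT']
      exact hfeN2.2
    · rw [if_neg hqT']
      have hq1T : q + 1 < T := by omega
      have hne : g2 (q + 1) ≠ m₂ := (hqspec.2).resolve_left hqT'
      have hgq : g2 q = m₂ := hqconst q hqt le_rfl
      have hglt : g2 q < g2 (q + 1) :=
        lt_of_le_of_ne (hgq ▸ hmin2 (q + 1) hq1T) (hgq ▸ (Ne.symm hne))
      have hxle := (hfeN2.1 q hqT).2
      rcases lt_or_eq_of_le hxle with hlt | heq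
      · exfalso
        have h5 := opt_up hfe₂ hopt₂ ha q hq1T hlt
        rw [← hg2app q, ← hg2app (q + 1)] at h5
        linarith
      · linarith
  -- value of Ssum u₂ at the left end
  have hB2 : Ssum u₂ p = (if p = 0 then 0 else -(E₂ / 2)) := by
    rcases hp2 with hp0 | ⟨hp1, hne⟩
    · rw [if_pos hp0, hp0]
      simp [Ssum]
    · rw [if_neg (by omega : ¬ p = 0)]
      have hpT : p < T := by omega
      have hk : (p - 1) + 1 < T := by omega
      have hp1e : p - 1 + 1 = p := by omega
      have hgp : g2 p = m₂ := hpconst p le_rfl hpt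
      have hglt : g2 p < g2 (p - 1) := by
        have hne2 : g2 p ≠ g2 (p - 1) := by rw [hgp]; exact Ne.symm hne
        exact lt_of_le_of_ne (hgp ▸ hmin2 (p - 1) (by omega)) hne2
      have hxge := (hfeN2.1 (p - 1) (by omega)).1
      rw [hp1e] at hxge
      rcases lt_or_eq_of_le hxge with hlt | heq
      · exfalso
        have h5 := opt_down hfe₂ hopt₂ ha (p - 1) hk (by rw [hp1e]; exact hlt)
        rw [hp1e, ← hg2app (p - 1), ← hg2app p] at h5
        linarith
      · linarith
  -- bounds for Ssum u₁
  have hA1 : Ssum u₁ (q + 1) ≤ (if q + 1 = T then 0 else E₂ / 2) := by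
    by_cases hqT' : q + 1 = T
    · rw [if_pos hqT', hqT']
      exact le_of_eq hfeN1.2
    · rw [if_neg hqT']
      have := (hfeN1.1 q hqT).2
      linarith
  have hB1 : (if p = 0 then (0:ℝ) else -(E₂ / 2)) ≤ Ssum u₁ p := by
    by_cases hp0 : p = 0
    · rw [if_pos hp0, hp0]
      simp [Ssum]
    · rw [if_neg hp0]
      have hp1e : p - 1 + 1 = p := by omega
      have hxge := (hfeN1.1 (p - 1) (by omega)).1
      rw [hp1e] at hxge
      linarith
  -- window inequalities
  have hwin2 : (W.card : ℝ) * m₂ = (∑ j ∈ W, ext0 d j) + (Ssum u₂ (q + 1) - Ssum u₂ p) := by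
    rw [← hsum2]
    exact hdecomp u₂
  have hwin1 : (W.card : ℝ) * m₁ ≤ (∑ j ∈ W, ext0 d j) + (Ssum u₁ (q + 1) - Ssum u₁ p) := by
    rw [← hdecomp u₁]
    have h6 : W.card • m₁ ≤ ∑ j ∈ W, g1 j :=
      Finset.card_nsmul_le_sum W g1 m₁ (fun j hj => hmin1 j (hWsub j hj))
    rw [nsmul_eq_mul] at h6
    exact h6
  have hcard_pos : 0 < W.card := by
    rw [hnW]; omega
  have hmul : (W.card : ℝ) * m₁ ≤ (W.card : ℝ) * m₂ := by
    rw [hwin2, hA2, hB2] at *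
    linarith [hwin1, hA1, hB1]
  exact le_of_mul_le_mul_left hmul (by exact_mod_cast hcard_pos)
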